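/- Let x = Σ_{i=0}^{B_x-1} a_i 2^{i}/2^{B_x} and y = Σ_{j=0}^{B_y-1} c_j 2^{j}/2^{B_y} with a_i, c_j ∈ {+1,-1}, and let ā_i = σ(a_i), c̄_j = σ(c_j) ∈ {0,1} where σ(t)=(1-t)/2. Define x̄ ⊗ ȳ = Σ_{i,j} (ā_i ⊕ c̄_j) · 2^{i+j}. Then x·y = (1/2^{B_x+B_y}) · ((2^{B_x}-1)(2^{B_y}-1) - 2·(x̄ ⊗ ȳ)). -/

import Mathlib

/-- With σ(t) = (1-t)/2 and ⊕ the XOR on {0,1} (x ⊕ y = x + y - 2xy on reals),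
and x̄ ⊗ ȳ = Σ_{i,j} (σ(a_i) ⊕ σ(c_j)) 2^{i+j}, we have
x·y = (1/2^{B_x+B_y}) ((2^{B_x}-1)(2^{B_y}-1) - 2 (x̄ ⊗ ȳ)). -/
theorem stmt_6 (Bx By : ℕ) (hBx : 0 < Bx) (hBy : 0 < By)
    (a c : ℕ → ℝ) (ha : ∀ i < Bx, a i = 1 ∨ a i = -1)
    (hc : ∀ j < By, c j = 1 ∨ c j = -1) (x y : ℝ)
    (hx : x = (∑ i ∈ Finset.range Bx, a i * 2 ^ i) / 2 ^ Bx)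
    (hy : y = (∑ j ∈ Finset.range By, c j * 2 ^ j) / 2 ^ By)
    (σ : ℝ → ℝ) (hσ : ∀ t, σ t = (1 - t) / 2)
    (xor : ℝ → ℝ → ℝ) (hxor : ∀ u v, xor u v = u + v - 2 * u * v)
    (T : ℝ)
    (hT : T = ∑ i ∈ Finset.range Bx, ∑ j ∈ Finset.range By,
      xor (σ (a i)) (σ (c j)) * 2 ^ (i + j)) :
    x * y = (1 / 2 ^ (Bx + By)) * ((2 ^ Bx - 1) * (2 ^ By - 1) - 2 * T) := by
  have hgeom : ∀ n : ℕ, ∑ i ∈ Finset.range n, (2:ℝ) ^ i = 2 ^ n - 1 := by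
    intro n
    rw [geom_sum_eq (by norm_num)]
    norm_num
  have hT' : T = ((2 ^ Bx - 1) * (2 ^ By - 1)
      - (∑ i ∈ Finset.range Bx, a i * 2 ^ i) * (∑ j ∈ Finset.range By, c j * 2 ^ j)) / 2 := by
    rw [hT]
    have : ∀ i j : ℕ, xor (σ (a i)) (σ (c j)) * 2 ^ (i + j)
        = (2:ℝ) ^ i * 2 ^ j / 2 - (a i * 2 ^ i) * (c j * 2 ^ j) / 2 := by
      intro i j
      rw [hxor, hσ, hσ, pow_add]
      ring
    have k : ∀ f g : ℕ → ℝ, (∑ i ∈ Finset.range Bx, ∑ j ∈ Finset.range By, f i * g j / 2)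
        = (∑ i ∈ Finset.range Bx, f i) * (∑ j ∈ Finset.range By, g j) / 2 := by
      intro f g
      rw [Finset.sum_mul_sum, Finset.sum_div]
      exact Finset.sum_congr rfl fun i _ => by rw [Finset.sum_div]
    simp only [this, Finset.sum_sub_distrib, k]
    rw [hgeom, hgeom]
    ring
  have h2 : (2:ℝ) ^ (Bx + By) ≠ 0 := by positivity
  rw [hx, hy, hT', pow_add]
  field_simp
  ring
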